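/- arXiv:2507.19336 — 2 statements merged into one kernel-verified Lean document; each statement's English description precedes it below -/
import Mathlib

section
/- Let m ≥ 4. Let A ⊆ {0,1}^m be the set of vectors with at most 2 transitions. Then |A| = 2·(C(m-1,0) + C(m-1,1) + C(m-1,2)) = 2·C(m,2) + 2, and A contains no 4×3 configuration equal (up to row and column permutation) to the matrix F_5 with columns (1,1,0,0), (1,0,1,0), (0,1,1,0): that is, there do not exist 4 positions i_1<i_2<i_3<i_4 and 3 distinct vectors in A whose restrictions to these positions are, up to permuting the 4 positions, the three columns of F_5. -/
/-- Number of transitions of a (0,1)-vector of length `m`. -/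
def transitions {m : ℕ} (v : Fin m → Bool) : ℕ :=
  (Finset.univ.filter (fun i : Fin m =>
    (if h : (i : ℕ) + 1 < m then v i != v ⟨(i : ℕ) + 1, h⟩ else false) = true)).card

/-- Number of ones of a (0,1)-vector. -/
def weight {m : ℕ} (v : Fin m → Bool) : ℕ :=
  (Finset.univ.filter (fun i : Fin m => v i = true)).card

def trans' {n : ℕ} (v : Fin (n+1) → Bool) : Finset (Fin n) :=
  Finset.univ.filter fun i => v i.castSucc ≠ v i.succ

lemma transitions_eq {n : ℕ} (v : Fin (n+1) → Bool) :
    transitions v = (trans' v).card := by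
  unfold transitions trans'
  symm
  apply Finset.card_bij (fun (a : Fin n) _ => a.castSucc)
  · intro a ha
    simp only [Finset.mem_filter, Finset.mem_univ, true_and] at ha ⊢
    have h : (a.castSucc : ℕ) + 1 < n + 1 := by simpa using Nat.succ_lt_succ a.isLt
    rw [dif_pos h]
    have : (⟨(a.castSucc : ℕ) + 1, h⟩ : Fin (n+1)) = a.succ := by
      simp [Fin.ext_iff]
    rw [this]
    simpa [bne_iff_ne] using ha
  · intro a _ b _ h
    exact Fin.castSucc_injective _ h
  · intro b hb
    simp only [Finset.mem_filter, Finset.mem_univ, true_and] at hb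
    by_cases h : (b : ℕ) + 1 < n + 1
    · refine ⟨⟨b, by omega⟩, ?_, by simp [Fin.ext_iff]⟩
      simp only [Finset.mem_filter, Finset.mem_univ, true_and]
      rw [dif_pos h] at hb
      have e1 : (⟨b, by omega⟩ : Fin n).castSucc = b := by simp [Fin.ext_iff]
      have e2 : (⟨b, by omega⟩ : Fin n).succ = ⟨(b : ℕ) + 1, h⟩ := by simp [Fin.ext_iff]
      rw [e1, e2]
      simpa [bne_iff_ne] using hb
    · rw [dif_neg h] at hb
      simp at hb

def decode {n : ℕ} (b : Bool) (S : Finset (Fin n)) : Fin (n+1) → Bool :=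
  fun i => xor (decide (Odd ((S.filter fun j : Fin n => (j : ℕ) < (i : ℕ)).card))) b

lemma filter_lt_succ {n : ℕ} (S : Finset (Fin n)) (k : ℕ) (hk : k < n) :
    (S.filter fun j : Fin n => (j : ℕ) < k + 1).card
      = (S.filter fun j : Fin n => (j : ℕ) < k).card
        + (if (⟨k, hk⟩ : Fin n) ∈ S then 1 else 0) := by
  have hsplit : (S.filter fun j : Fin n => (j : ℕ) < k + 1)
      = (S.filter fun j : Fin n => (j : ℕ) < k) ∪ (S.filter fun j : Fin n => j = ⟨k, hk⟩) := by
    ext j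
    simp only [Finset.mem_filter, Finset.mem_union, Fin.ext_iff]
    constructor
    · rintro ⟨hj, hlt⟩
      rcases Nat.lt_succ_iff_lt_or_eq.mp hlt with h | h
      · exact Or.inl ⟨hj, h⟩
      · exact Or.inr ⟨hj, h⟩
    · rintro (⟨hj, h⟩ | ⟨hj, h⟩) <;> exact ⟨hj, by omega⟩
  rw [hsplit, Finset.card_union_of_disjoint, Finset.filter_eq']
  · split <;> simp
  · rw [Finset.disjoint_filter]
    rintro j _ hlt rfl
    simp at hlt

lemma decode_zero {n : ℕ} (b : Bool) (S : Finset (Fin n)) (h : (0:ℕ) < n + 1) :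
    decode b S ⟨0, h⟩ = b := by
  simp [decode]

lemma decode_succ {n : ℕ} (b : Bool) (S : Finset (Fin n)) (i : Fin n) :
    decode b S i.succ = xor (decide (i ∈ S)) (decode b S i.castSucc) := by
  unfold decode
  have h1 : (i.succ : ℕ) = (i : ℕ) + 1 := rfl
  have h2 : (i.castSucc : ℕ) = (i : ℕ) := rfl
  rw [h1, h2, filter_lt_succ S i i.isLt]
  have : (⟨(i : ℕ), i.isLt⟩ : Fin n) = i := rfl
  rw [this]
  by_cases hi : i ∈ S
  · rw [if_pos hi]
    simp only [hi, decide_eq_true_eq, Nat.odd_add_one, decide_not]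
    cases hd : decide (Odd ((S.filter fun j : Fin n => (j:ℕ) < (i:ℕ)).card)) <;>
      cases b <;> simp [hd]
  · simp [hi]

lemma trans'_decode {n : ℕ} (b : Bool) (S : Finset (Fin n)) :
    trans' (decode b S) = S := by
  ext i
  simp only [trans', Finset.mem_filter, Finset.mem_univ, true_and, decode_succ]
  cases hd : decide (i ∈ S) <;> cases hc : decode b S i.castSucc <;>
    simp_all

lemma decode_encode {n : ℕ} (v : Fin (n+1) → Bool) :
    decode (v 0) (trans' v) = v := by
  funext i
  obtain ⟨k, hk⟩ := i
  induction k with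
  | zero =>
      have : (⟨0, hk⟩ : Fin (n+1)) = 0 := rfl
      rw [this]
      simp [decode]
  | succ k ih =>
      have hkn : k < n := by omega
      have hk' : k < n + 1 := by omega
      have hsucc : (⟨k+1, hk⟩ : Fin (n+1)) = (⟨k, hkn⟩ : Fin n).succ := rfl
      have hcast : (⟨k, hk'⟩ : Fin (n+1)) = (⟨k, hkn⟩ : Fin n).castSucc := rfl
      rw [hsucc, decode_succ, ← hcast, ih hk', ← hsucc]
      by_cases hm : (⟨k, hkn⟩ : Fin n) ∈ trans' v
      · have hne : v (⟨k, hk'⟩ : Fin (n+1)) ≠ v (⟨k+1, hk⟩ : Fin (n+1)) := by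
          rw [hcast, hsucc]
          simpa [trans'] using hm
        have hd : decide ((⟨k, hkn⟩ : Fin n) ∈ trans' v) = true := by simpa using hm
        rw [hd]
        revert hne
        have hb : ∀ a c : Bool, a ≠ c → xor true a = c := by decide
        exact hb _ _
      · have hne : v (⟨k, hk'⟩ : Fin (n+1)) = v (⟨k+1, hk⟩ : Fin (n+1)) := by
          rw [hcast, hsucc]
          simpa [trans'] using hm
        have hd : decide ((⟨k, hkn⟩ : Fin n) ∈ trans' v) = false := by simpa using hm
        rw [hd]
        simpa using hne

lemma decode_zero' {n : ℕ} (b : Bool) (S : Finset (Fin n)) : decode b S 0 = b := by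
  simp [decode]

lemma count_eq {n : ℕ} :
    (Finset.univ.filter (fun v : Fin (n+1) → Bool => transitions v ≤ 2)).card
      = 2 * (n.choose 0 + n.choose 1 + n.choose 2) := by
  have step1 : (Finset.univ.filter (fun v : Fin (n+1) → Bool => transitions v ≤ 2)).card
      = (Finset.univ.filter (fun p : Bool × Finset (Fin n) => p.2.card ≤ 2)).card := by
    apply Finset.card_bij' (fun v _ => ((v 0, trans' v) : Bool × Finset (Fin n)))
      (fun p _ => decode p.1 p.2)
    · intro v hv
      simp only [Finset.mem_filter, Finset.mem_univ, true_and] at hv ⊢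
      rwa [transitions_eq] at hv
    · intro p hp
      simp only [Finset.mem_filter, Finset.mem_univ, true_and] at hp ⊢
      rw [transitions_eq, trans'_decode]
      exact hp
    · intro v _
      exact decode_encode v
    · intro p _
      ext1
      · exact decode_zero' p.1 p.2
      · exact trans'_decode p.1 p.2
  rw [step1]
  have step2 : (Finset.univ.filter (fun p : Bool × Finset (Fin n) => p.2.card ≤ 2))
      = (Finset.univ : Finset Bool) ×ˢ (Finset.univ.filter (fun S : Finset (Fin n) => S.card ≤ 2)) := by
    ext ⟨b, S⟩
    simp
  rw [step2, Finset.card_product]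
  have cardk : ∀ k : ℕ, (Finset.univ.filter (fun S : Finset (Fin n) => S.card = k)).card
      = n.choose k := by
    intro k
    rw [← Finset.powerset_univ, ← Finset.powersetCard_eq_filter, Finset.card_powersetCard,
      Finset.card_univ, Fintype.card_fin]
  have split : (Finset.univ.filter (fun S : Finset (Fin n) => S.card ≤ 2))
      = (Finset.univ.filter (fun S : Finset (Fin n) => S.card = 0))
        ∪ (Finset.univ.filter (fun S : Finset (Fin n) => S.card = 1))
        ∪ (Finset.univ.filter (fun S : Finset (Fin n) => S.card = 2)) := by
    ext S
    simp only [Finset.mem_filter, Finset.mem_union, Finset.mem_univ, true_and]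
    omega
  have d1 : Disjoint (Finset.univ.filter (fun S : Finset (Fin n) => S.card = 0))
      (Finset.univ.filter (fun S : Finset (Fin n) => S.card = 1)) := by
    rw [Finset.disjoint_filter]
    intro S _ h1 h2
    omega
  have d2 : Disjoint ((Finset.univ.filter (fun S : Finset (Fin n) => S.card = 0))
        ∪ (Finset.univ.filter (fun S : Finset (Fin n) => S.card = 1)))
      (Finset.univ.filter (fun S : Finset (Fin n) => S.card = 2)) := by
    rw [Finset.disjoint_left]
    intro S hS hS2
    simp only [Finset.mem_filter, Finset.mem_union, Finset.mem_univ, true_and] at hS hS2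
    omega
  rw [split, Finset.card_union_of_disjoint d2, Finset.card_union_of_disjoint d1,
    cardk 0, cardk 1, cardk 2]
  simp [Fintype.card_bool]

lemma exists_nat_trans (f : ℕ → Bool) :
    ∀ b a, a ≤ b → f a ≠ f b → ∃ i, a ≤ i ∧ i < b ∧ f i ≠ f (i+1) := by
  intro b
  induction b with
  | zero =>
      intro a ha hf
      rw [Nat.le_zero.mp ha] at hf
      exact absurd rfl hf
  | succ b ih =>
      intro a ha hf
      by_cases h : f a = f b
      · have hab : a ≤ b := by
          by_contra hc
          have h' : a = b + 1 := by omega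
          subst h'
          exact hf rfl
        refine ⟨b, hab, Nat.lt_succ_self b, ?_⟩
        rw [← h]
        exact hf
      · have hab : a ≤ b := by
          by_contra hc
          have : a = b + 1 := by omega
          exact hf (by rw [this])
        obtain ⟨i, h1, h2, h3⟩ := ih a hab h
        exact ⟨i, h1, by omega, h3⟩

lemma trans_comp_le {n : ℕ} (v : Fin (n+1) → Bool) (g : Fin 4 → Fin (n+1))
    (hg : StrictMono g) : transitions (fun k => v (g k)) ≤ transitions v := by
  have hn : 3 ≤ n := by
    have := Fintype.card_le_of_injective g hg.injective
    simpa using this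
  rw [transitions_eq, transitions_eq]
  set f : ℕ → Bool := fun i => if h : i < n + 1 then v ⟨i, h⟩ else true with hf
  have H : ∀ j ∈ trans' (fun k : Fin (3+1) => v (g k)), ∃ i : Fin n,
      (g j.castSucc : ℕ) ≤ (i : ℕ) ∧ (i : ℕ) + 1 ≤ (g j.succ : ℕ) ∧ i ∈ trans' v := by
    intro j hj
    simp only [trans', Finset.mem_filter, Finset.mem_univ, true_and] at hj
    have hlt : g j.castSucc < g j.succ := hg (by simp [Fin.lt_def])
    have hne : f (g j.castSucc : ℕ) ≠ f (g j.succ : ℕ) := by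
      simp only [hf]
      rw [dif_pos (g j.castSucc).isLt, dif_pos (g j.succ).isLt]
      simpa using hj
    obtain ⟨i, h1, h2, h3⟩ := exists_nat_trans f _ _ (le_of_lt hlt) hne
    have hin : i < n := by
      have : (g j.succ : ℕ) < n + 1 := (g j.succ).isLt
      omega
    refine ⟨⟨i, hin⟩, h1, Nat.succ_le_of_lt h2, ?_⟩
    simp only [trans', Finset.mem_filter, Finset.mem_univ, true_and]
    have e1 : f i = v ((⟨i, hin⟩ : Fin n).castSucc) := by
      simp only [hf]
      rw [dif_pos (by omega : i < n + 1)]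
      rfl
    have e2 : f (i+1) = v ((⟨i, hin⟩ : Fin n).succ) := by
      simp only [hf]
      rw [dif_pos (by omega : i + 1 < n + 1)]
      rfl
    rw [e1, e2] at h3
    exact h3
  have : Nonempty (Fin n) := ⟨⟨0, by omega⟩⟩
  choose! φ hφ1 hφ2 hφ3 using H
  apply Finset.card_le_card_of_injOn φ
  · intro j hj
    exact hφ3 j hj
  · intro j hj j' hj' heq
    rw [Finset.mem_coe] at hj hj'
    by_contra hne
    rcases lt_trichotomy j j' with hlt | h | hlt
    · have hle : g j.succ ≤ g j'.castSucc := hg.monotone (by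
        simp only [Fin.le_def, Fin.val_succ, Fin.coe_castSucc]
        exact hlt)
      have a1 := hφ1 j hj
      have a2 := hφ2 j hj
      have a3 := hφ1 j' hj'
      have a4 := hφ2 j' hj'
      have : (φ j : ℕ) < (φ j' : ℕ) := by
        have := Fin.le_def.mp hle
        omega
      rw [heq] at this
      omega
    · exact hne h
    · have hle : g j'.succ ≤ g j.castSucc := hg.monotone (by
        simp only [Fin.le_def, Fin.val_succ, Fin.coe_castSucc]
        exact hlt)
      have a1 := hφ1 j hj
      have a2 := hφ2 j hj
      have a3 := hφ1 j' hj'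
      have a4 := hφ2 j' hj'
      have : (φ j' : ℕ) < (φ j : ℕ) := by
        have := Fin.le_def.mp hle
        omega
      rw [heq] at this
      omega

set_option maxRecDepth 10000 in
lemma key_decide : ∀ τ : Fin 4 → Fin 4, Function.Injective τ →
    ¬(transitions (fun k => ![true,true,false,false] (τ k)) ≤ 2 ∧
      transitions (fun k => ![true,false,true,false] (τ k)) ≤ 2 ∧
      transitions (fun k => ![false,true,true,false] (τ k)) ≤ 2) := by decide


/-- for m ≥ 4, the set A of vectors in {0,1}^m with at most 2 transitions
has size 2(C(m-1,0)+C(m-1,1)+C(m-1,2)) = 2·C(m,2)+2, and contains no configuration F₅. -/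
theorem stmt_12 (m : ℕ) (hm : 4 ≤ m) :
    (Finset.univ.filter (fun v : Fin m → Bool => transitions v ≤ 2)).card
        = 2 * ((m - 1).choose 0 + (m - 1).choose 1 + (m - 1).choose 2) ∧
    2 * ((m - 1).choose 0 + (m - 1).choose 1 + (m - 1).choose 2) = 2 * m.choose 2 + 2 ∧
    ¬ ∃ g : Fin 4 → Fin m, StrictMono g ∧ ∃ σ : Equiv.Perm (Fin 4),
      ∃ v₁ v₂ v₃ : Fin m → Bool,
        transitions v₁ ≤ 2 ∧ transitions v₂ ≤ 2 ∧ transitions v₃ ≤ 2 ∧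
        v₁ ≠ v₂ ∧ v₁ ≠ v₃ ∧ v₂ ≠ v₃ ∧
        (∀ j : Fin 4, v₁ (g (σ j)) = ![true, true, false, false] j) ∧
        (∀ j : Fin 4, v₂ (g (σ j)) = ![true, false, true, false] j) ∧
        (∀ j : Fin 4, v₃ (g (σ j)) = ![false, true, true, false] j) := by
  obtain ⟨n, rfl⟩ : ∃ n, m = n + 1 := ⟨m - 1, by omega⟩
  have hsub : n + 1 - 1 = n := rfl
  refine ⟨?_, ?_, ?_⟩
  · rw [hsub]
    exact count_eq
  · rw [hsub, Nat.choose_succ_succ n 1, Nat.choose_zero_right, Nat.choose_one_right,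
      show Nat.succ 1 = 2 from rfl]
    omega
  · rintro ⟨g, hg, σ, v₁, v₂, v₃, h1, h2, h3, -, -, -, e1, e2, e3⟩
    have w1 : (fun k => v₁ (g k)) = fun k => ![true,true,false,false] (σ.symm k) := by
      funext k
      have := e1 (σ.symm k)
      rwa [Equiv.apply_symm_apply] at this
    have w2 : (fun k => v₂ (g k)) = fun k => ![true,false,true,false] (σ.symm k) := by
      funext k
      have := e2 (σ.symm k)
      rwa [Equiv.apply_symm_apply] at this
    have w3 : (fun k => v₃ (g k)) = fun k => ![false,true,true,false] (σ.symm k) := by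
      funext k
      have := e3 (σ.symm k)
      rwa [Equiv.apply_symm_apply] at this
    refine key_decide σ.symm σ.symm.injective ⟨?_, ?_, ?_⟩
    · rw [← w1]
      exact le_trans (trans_comp_le v₁ g hg) h1
    · rw [← w2]
      exact le_trans (trans_comp_le v₂ g hg) h2
    · rw [← w3]
      exact le_trans (trans_comp_le v₃ g hg) h3
end

section
/- Let m ≥ 2 and k ≥ 3. Let A be the m-rowed (0,1)-matrix whose columns are all vectors of weight at most k-2 together with the codewords of a binary constant-weight code of length m, weight k-1, and minimum Hamming distance 4. Then A is simple (no repeated columns) and no two distinct columns of A both have k-1 ones with their supports intersecting in k-2 common positions; equivalently, A avoids the configuration I_2 × 1_{k-2} (the (k)×2 matrix [[1,0],[0,1],[1,1],...,[1,1]] with k-2 rows of (1,1) below I_2). -/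
lemma card_ge_two (k : ℕ) :
    (Finset.univ.filter (fun j : Fin k => 2 ≤ (j:ℕ))).card = k - 2 := by
  rw [Finset.card_filter]
  rw [Fin.sum_univ_eq_sum_range (fun j => if 2 ≤ j then 1 else 0)]
  rw [← Finset.card_filter]
  have : Finset.filter (fun j => 2 ≤ j) (Finset.range k) = Finset.Ico 2 k := by
    ext x; simp [Finset.mem_Ico, and_comm]
  rw [this, Nat.card_Ico]

lemma dist_key {m : ℕ} (u v : Fin m → Bool) :
    (Finset.univ.filter (fun i => u i ≠ v i)).card
      + 2 * (Finset.univ.filter (fun i => u i = true ∧ v i = true)).card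
      = weight u + weight v := by
  simp only [weight, Finset.card_filter, Finset.mul_sum, ← Finset.sum_add_distrib]
  apply Finset.sum_congr rfl
  intro i _
  cases u i <;> cases v i <;> simp

/-- with A the union of all columns of weight ≤ k-2 with a constant-weight
code C of weight k-1 and minimum distance 4, A is simple (the union is disjoint), no two
distinct weight-(k-1) columns of A share k-2 common ones, and A avoids I₂ × 1_{k-2}. -/
theorem stmt_14 (m k : ℕ) (hk : 3 ≤ k) (C : Finset (Fin m → Bool))
    (hCw : ∀ c ∈ C, weight c = k - 1)
    (hCd : ∀ c ∈ C, ∀ d ∈ C, c ≠ d →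
      4 ≤ (Finset.univ.filter (fun i => c i ≠ d i)).card) :
    ((Finset.univ.filter (fun v : Fin m → Bool => weight v ≤ k - 2)) ∪ C).card
        = (Finset.univ.filter (fun v : Fin m → Bool => weight v ≤ k - 2)).card + C.card ∧
    (∀ u ∈ (Finset.univ.filter (fun v : Fin m → Bool => weight v ≤ k - 2)) ∪ C,
      ∀ v ∈ (Finset.univ.filter (fun v : Fin m → Bool => weight v ≤ k - 2)) ∪ C,
        u ≠ v → weight u = k - 1 → weight v = k - 1 →
          (Finset.univ.filter (fun i => u i = true ∧ v i = true)).card ≠ k - 2) ∧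
    ¬ ∃ f : Fin k → Fin m, Function.Injective f ∧
      ∃ u ∈ (Finset.univ.filter (fun v : Fin m → Bool => weight v ≤ k - 2)) ∪ C,
        ∃ v ∈ (Finset.univ.filter (fun v : Fin m → Bool => weight v ≤ k - 2)) ∪ C,
          u ≠ v ∧
          u (f ⟨0, by omega⟩) = true ∧ v (f ⟨0, by omega⟩) = false ∧
          u (f ⟨1, by omega⟩) = false ∧ v (f ⟨1, by omega⟩) = true ∧
          ∀ j : Fin k, 2 ≤ (j : ℕ) → u (f j) = true ∧ v (f j) = true := by
  -- membership in the union with weight k-1 forces membership in C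
  have hmemC : ∀ u ∈ (Finset.univ.filter (fun v : Fin m → Bool => weight v ≤ k - 2)) ∪ C,
      weight u = k - 1 → u ∈ C := by
    intro u hu hw
    rcases Finset.mem_union.mp hu with h | h
    · exfalso
      have := (Finset.mem_filter.mp h).2
      omega
    · exact h
  -- Part 2
  have part2 : ∀ u ∈ (Finset.univ.filter (fun v : Fin m → Bool => weight v ≤ k - 2)) ∪ C,
      ∀ v ∈ (Finset.univ.filter (fun v : Fin m → Bool => weight v ≤ k - 2)) ∪ C,
        u ≠ v → weight u = k - 1 → weight v = k - 1 →
          (Finset.univ.filter (fun i => u i = true ∧ v i = true)).card ≠ k - 2 := by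
    intro u hu v hv huv hwu hwv hcommon
    have huC := hmemC u hu hwu
    have hvC := hmemC v hv hwv
    have hd := hCd u huC v hvC huv
    have hkey := dist_key u v
    rw [hcommon, hwu, hwv] at hkey
    omega
  refine ⟨?_, part2, ?_⟩
  · -- disjoint union
    apply Finset.card_union_of_disjoint
    rw [Finset.disjoint_left]
    intro a ha haC
    have h1 := (Finset.mem_filter.mp ha).2
    have h2 := hCw a haC
    omega
  · -- avoids I₂ × 1_{k-2}
    rintro ⟨f, hf, u, hu, v, hv, huv, hu0, hv0, hu1, hv1, hj⟩
    set T : Finset (Fin k) := Finset.univ.filter (fun j : Fin k => 2 ≤ (j:ℕ)) with hT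
    set S : Finset (Fin m) := T.image f with hS
    have hScard : S.card = k - 2 := by
      rw [hS, Finset.card_image_of_injective _ hf, card_ge_two]
    have hf0S : f ⟨0, by omega⟩ ∉ S := by
      intro h
      rcases Finset.mem_image.mp h with ⟨j, hjT, hje⟩
      have he := hf hje
      have h2 := (Finset.mem_filter.mp hjT).2
      rw [he] at h2
      simp at h2
    have hf1S : f ⟨1, by omega⟩ ∉ S := by
      intro h
      rcases Finset.mem_image.mp h with ⟨j, hjT, hje⟩
      have he := hf hje
      have h2 := (Finset.mem_filter.mp hjT).2
      rw [he] at h2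
      simp at h2
    -- supports
    have hsupp : ∀ (w : Fin m → Bool) (i0 : Fin m), w i0 = true → i0 ∉ S →
        (∀ i ∈ S, w i = true) → weight w = k - 1 →
        Finset.univ.filter (fun i => w i = true) = insert i0 S := by
      intro w i0 hwi0 hi0S hSw hww
      have hsub : insert i0 S ⊆ Finset.univ.filter (fun i => w i = true) := by
        intro i hi
        rcases Finset.mem_insert.mp hi with rfl | hiS
        · exact Finset.mem_filter.mpr ⟨Finset.mem_univ _, hwi0⟩
        · exact Finset.mem_filter.mpr ⟨Finset.mem_univ _, hSw i hiS⟩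
      have hcard : (insert i0 S).card = k - 1 := by
        rw [Finset.card_insert_of_notMem hi0S, hScard]; omega
      exact (Finset.eq_of_subset_of_card_le hsub (by rw [hcard, ← hww]; exact le_refl _)).symm
    have hSu : ∀ i ∈ S, u i = true := by
      intro i hi
      rcases Finset.mem_image.mp hi with ⟨j, hjT, rfl⟩
      exact (hj j (Finset.mem_filter.mp hjT).2).1
    have hSv : ∀ i ∈ S, v i = true := by
      intro i hi
      rcases Finset.mem_image.mp hi with ⟨j, hjT, rfl⟩
      exact (hj j (Finset.mem_filter.mp hjT).2).2
    -- weight u ≥ k-1, so u ∈ C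
    have hwu : weight u = k - 1 := by
      have hsub : insert (f ⟨0, by omega⟩) S ⊆ Finset.univ.filter (fun i => u i = true) := by
        intro i hi
        rcases Finset.mem_insert.mp hi with rfl | hiS
        · exact Finset.mem_filter.mpr ⟨Finset.mem_univ _, hu0⟩
        · exact Finset.mem_filter.mpr ⟨Finset.mem_univ _, hSu i hiS⟩
      have hge : k - 1 ≤ weight u := by
        have := Finset.card_le_card hsub
        rw [Finset.card_insert_of_notMem hf0S, hScard] at this
        unfold weight; omega
      rcases Finset.mem_union.mp hu with h | h
      · have := (Finset.mem_filter.mp h).2; omega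
      · exact hCw u h
    have hwv : weight v = k - 1 := by
      have hsub : insert (f ⟨1, by omega⟩) S ⊆ Finset.univ.filter (fun i => v i = true) := by
        intro i hi
        rcases Finset.mem_insert.mp hi with rfl | hiS
        · exact Finset.mem_filter.mpr ⟨Finset.mem_univ _, hv1⟩
        · exact Finset.mem_filter.mpr ⟨Finset.mem_univ _, hSv i hiS⟩
      have hge : k - 1 ≤ weight v := by
        have := Finset.card_le_card hsub
        rw [Finset.card_insert_of_notMem hf1S, hScard] at this
        unfold weight; omega
      rcases Finset.mem_union.mp hv with h | h
      · have := (Finset.mem_filter.mp h).2; omega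
      · exact hCw v h
    have huppt := hsupp u (f ⟨0, by omega⟩) hu0 hf0S hSu hwu
    have hvppt := hsupp v (f ⟨1, by omega⟩) hv1 hf1S hSv hwv
    -- common ones = S
    have hcomm : Finset.univ.filter (fun i => u i = true ∧ v i = true) = S := by
      ext i
      simp only [Finset.mem_filter, Finset.mem_univ, true_and]
      constructor
      · rintro ⟨hui, hvi⟩
        have hiu : i ∈ insert (f ⟨0, by omega⟩) S := by
          rw [← huppt]; exact Finset.mem_filter.mpr ⟨Finset.mem_univ _, hui⟩
        rcases Finset.mem_insert.mp hiu with rfl | hiS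
        · rw [hv0] at hvi; exact absurd hvi (by simp)
        · exact hiS
      · intro hiS
        exact ⟨hSu i hiS, hSv i hiS⟩
    exact part2 u hu v hv huv hwu hwv (by rw [hcomm, hScard])
end
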